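/- Molien's formula: for a finite group G acting linearly on a finite-dimensional complex vector space V, the Poincaré series ∑_{j≥0} dim ℂ[V]^G_j · t^j of the graded algebra of G-invariant polynomials equals (1/|G|) ∑_{g∈G} 1/det(1 - t·g). -/

import Mathlib

open MvPolynomial

/-- The linear action of `g ∈ G` (via `ρ : G →* GLₙ(ℂ)`) on polynomial functions on
`V = ℂⁿ`: `(g • f)(v) = f(g⁻¹ v)`, i.e. the substitution `xᵢ ↦ ∑ⱼ (ρ g)⁻¹ⱼᵢ xⱼ`. -/
noncomputable def polyAct {n : ℕ} {G : Type*} [Group G]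
    (ρ : G →* Matrix.GeneralLinearGroup (Fin n) ℂ) (g : G) :
    MvPolynomial (Fin n) ℂ →ₐ[ℂ] MvPolynomial (Fin n) ℂ :=
  aeval fun i => ∑ j, (((ρ g)⁻¹ : Matrix.GeneralLinearGroup (Fin n) ℂ) : Matrix (Fin n) (Fin n) ℂ) j i • X j

/-- The space `ℂ[V]^G_j` of `G`-invariant homogeneous polynomials of degree `j`. -/
noncomputable def invariantsDeg {n : ℕ} {G : Type*} [Group G]
    (ρ : G →* Matrix.GeneralLinearGroup (Fin n) ℂ) (j : ℕ) :
    Submodule ℂ (MvPolynomial (Fin n) ℂ) :=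
  homogeneousSubmodule (Fin n) ℂ j ⊓
    ⨅ g : G, LinearMap.ker ((polyAct ρ g).toLinearMap - LinearMap.id)

namespace MolienAux

open Matrix LinearMap Module Finset

variable {n : ℕ}

/-- Substitution `xᵢ ↦ ∑ⱼ Mⱼᵢ xⱼ` as an algebra homomorphism. -/
noncomputable def msubst (M : Matrix (Fin n) (Fin n) ℂ) :
    MvPolynomial (Fin n) ℂ →ₐ[ℂ] MvPolynomial (Fin n) ℂ :=
  aeval fun i => ∑ j, M j i • X j

lemma msubst_comp (M N : Matrix (Fin n) (Fin n) ℂ) :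
    (msubst M).comp (msubst N) = msubst (M * N) := by
  apply MvPolynomial.algHom_ext
  intro i
  simp only [AlgHom.comp_apply, msubst, aeval_X, map_sum, _root_.map_smul, Finset.smul_sum,
    smul_smul, Matrix.mul_apply, Finset.sum_smul]
  rw [Finset.sum_comm]
  simp [mul_comm]

lemma msubst_msubst (M N : Matrix (Fin n) (Fin n) ℂ) (p : MvPolynomial (Fin n) ℂ) :
    msubst M (msubst N p) = msubst (M * N) p := by
  have := msubst_comp M N
  calc msubst M (msubst N p) = ((msubst M).comp (msubst N)) p := rfl
    _ = msubst (M * N) p := by rw [this]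

lemma msubst_one (p : MvPolynomial (Fin n) ℂ) : msubst 1 p = p := by
  have : msubst (1 : Matrix (Fin n) (Fin n) ℂ) = AlgHom.id ℂ _ := by
    apply MvPolynomial.algHom_ext
    intro i
    simp [msubst, Matrix.one_apply, ite_smul]
  rw [this]; rfl

lemma msubst_mem {j : ℕ} (M : Matrix (Fin n) (Fin n) ℂ) {p : MvPolynomial (Fin n) ℂ}
    (hp : p ∈ homogeneousSubmodule (Fin n) ℂ j) :
    msubst M p ∈ homogeneousSubmodule (Fin n) ℂ j := by
  rw [mem_homogeneousSubmodule] at hp ⊢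
  have hg : ∀ i : Fin n, ((∑ k, M k i • X k : MvPolynomial (Fin n) ℂ)).IsHomogeneous 1 := by
    intro i
    apply MvPolynomial.IsHomogeneous.sum
    intro k _
    rw [MvPolynomial.smul_eq_C_mul]
    exact MvPolynomial.isHomogeneous_C_mul_X _ _
  have := hp.aeval _ hg
  simpa [msubst] using this

/-- `msubst M` restricted to the degree-`j` homogeneous component. -/
noncomputable def msubstH (j : ℕ) (M : Matrix (Fin n) (Fin n) ℂ) :
    homogeneousSubmodule (Fin n) ℂ j →ₗ[ℂ] homogeneousSubmodule (Fin n) ℂ j :=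
  (msubst M).toLinearMap.restrict (fun _ hp => msubst_mem M hp)

lemma msubstH_apply (j : ℕ) (M : Matrix (Fin n) (Fin n) ℂ)
    (p : homogeneousSubmodule (Fin n) ℂ j) :
    (msubstH j M p : MvPolynomial (Fin n) ℂ) = msubst M p := rfl

lemma msubstH_mul (j : ℕ) (M N : Matrix (Fin n) (Fin n) ℂ) :
    msubstH j (M * N) = msubstH j M * msubstH j N := by
  apply LinearMap.ext
  intro p
  apply Subtype.ext
  show (msubst (M * N) p : MvPolynomial (Fin n) ℂ) = msubst M (msubst N p)
  rw [msubst_msubst]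

lemma msubstH_one (j : ℕ) : msubstH j (1 : Matrix (Fin n) (Fin n) ℂ) = 1 := by
  apply LinearMap.ext
  intro p
  apply Subtype.ext
  show msubst 1 (p : MvPolynomial (Fin n) ℂ) = p
  rw [msubst_one]

instance fintypeDeg (j : ℕ) : Fintype {d : Fin n →₀ ℕ // Finsupp.degree d = j} := by
  apply Fintype.subtype (Finset.finsuppAntidiag (Finset.univ : Finset (Fin n)) j)
  intro d
  rw [Finset.mem_finsuppAntidiag]
  have hdeg : Finsupp.degree d = Finset.univ.sum d :=
    Finset.sum_subset (Finset.subset_univ _)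
      (fun i _ hi => Finsupp.notMem_support_iff.mp hi)
  constructor
  · rintro ⟨h, -⟩; rw [hdeg, h]
  · intro h; exact ⟨by rw [← hdeg, h], Finset.subset_univ _⟩

lemma span_monomials (j : ℕ) :
    Submodule.span ℂ (Set.range (fun d : {d : Fin n →₀ ℕ // Finsupp.degree d = j} =>
        (monomial d.1 (1 : ℂ) : MvPolynomial (Fin n) ℂ)))
      = homogeneousSubmodule (Fin n) ℂ j := by
  apply le_antisymm
  · rw [Submodule.span_le]
    rintro _ ⟨d, rfl⟩
    exact (mem_homogeneousSubmodule _ _).2 (isHomogeneous_monomial _ d.2)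
  · intro p hp
    rw [← support_sum_monomial_coeff p]
    apply Submodule.sum_mem
    intro d hd
    have hdeg : Finsupp.degree d = j := by
      by_contra h
      exact (mem_support_iff.mp hd) (((mem_homogeneousSubmodule _ _).1 hp).coeff_eq_zero h)
    have : (monomial d (coeff d p) : MvPolynomial (Fin n) ℂ)
        = (coeff d p) • monomial d 1 := by
      rw [smul_monomial, smul_eq_mul, mul_one]
    rw [this]
    exact Submodule.smul_mem _ _ (Submodule.subset_span ⟨⟨d, hdeg⟩, rfl⟩)

/-- The monomial basis of the degree-`j` homogeneous component. -/
noncomputable def hbasis (j : ℕ) :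
    Basis {d : Fin n →₀ ℕ // Finsupp.degree d = j} ℂ (homogeneousSubmodule (Fin n) ℂ j) := by
  apply Basis.mk (v := fun d => (⟨monomial d.1 1,
      (mem_homogeneousSubmodule _ _).2 (isHomogeneous_monomial _ d.2)⟩ :
      homogeneousSubmodule (Fin n) ℂ j))
  · apply LinearIndependent.of_comp (homogeneousSubmodule (Fin n) ℂ j).subtype
    have h1 := (basisMonomials (Fin n) ℂ).linearIndependent
    have h2 := h1.comp (fun d : {d : Fin n →₀ ℕ // Finsupp.degree d = j} => d.1)
      Subtype.val_injective
    simpa [coe_basisMonomials, Function.comp_def] using h2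
  · rw [top_le_iff]
    apply Submodule.map_injective_of_injective (Submodule.injective_subtype
      (homogeneousSubmodule (Fin n) ℂ j))
    rw [Submodule.map_span, Submodule.map_top, Submodule.range_subtype]
    rw [← Set.range_comp]
    have h3 : ((homogeneousSubmodule (Fin n) ℂ j).subtype ∘
        fun d : {d : Fin n →₀ ℕ // Finsupp.degree d = j} =>
          (⟨monomial d.1 1, (mem_homogeneousSubmodule _ _).2 (isHomogeneous_monomial _ d.2)⟩ :
            homogeneousSubmodule (Fin n) ℂ j))
        = fun d : {d : Fin n →₀ ℕ // Finsupp.degree d = j} =>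
            (monomial d.1 (1 : ℂ) : MvPolynomial (Fin n) ℂ) := rfl
    rw [h3]
    exact span_monomials j

instance (j : ℕ) : Module.Finite ℂ (homogeneousSubmodule (Fin n) ℂ j) :=
  Module.Finite.of_basis (hbasis j)

lemma msubst_monomial_diagonal (lam : Fin n → ℂ) (d : Fin n →₀ ℕ) :
    msubst (Matrix.diagonal lam) (monomial d (1 : ℂ))
      = (∏ i, lam i ^ d i) • monomial d 1 := by
  rw [msubst, aeval_monomial, _root_.map_one, one_mul]
  have h1 : ∀ i : Fin n, (∑ k, Matrix.diagonal lam k i • (X k : MvPolynomial (Fin n) ℂ))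
      = lam i • X i := by
    intro i
    rw [Finset.sum_eq_single i]
    · simp [Matrix.diagonal_apply]
    · intro k _ hk; simp [Matrix.diagonal_apply, hk]
    · simp
  rw [Finsupp.prod_congr (fun i _ => by rw [h1 i])]
  have h2 : (d.prod fun i e => (lam i • (X i : MvPolynomial (Fin n) ℂ)) ^ e)
      = C (∏ a ∈ d.support, lam a ^ d a) * d.prod fun i e => (X i : MvPolynomial (Fin n) ℂ) ^ e := by
    rw [Finsupp.prod, Finsupp.prod, map_prod, ← Finset.prod_mul_distrib]
    exact Finset.prod_congr rfl fun i _ => by rw [smul_eq_C_mul, mul_pow, map_pow]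
  rw [h2, ← smul_eq_C_mul]
  have h3 : (∏ a ∈ d.support, lam a ^ d a) = ∏ i, lam i ^ d i :=
    Finset.prod_subset (Finset.subset_univ _)
      (fun i _ hi => by rw [Finsupp.notMem_support_iff.mp hi, pow_zero])
  rw [h3, monomial_eq, C_1, one_mul]

lemma msubstH_diagonal_apply (j : ℕ) (lam : Fin n → ℂ)
    (d : {d : Fin n →₀ ℕ // Finsupp.degree d = j}) :
    msubstH j (Matrix.diagonal lam) (hbasis j d) = (∏ i, lam i ^ d.1 i) • hbasis j d := by
  apply Subtype.ext
  rw [hbasis, Basis.mk_apply]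
  show msubst (Matrix.diagonal lam) (monomial d.1 1) = (∏ i, lam i ^ d.1 i) • monomial d.1 1
  exact msubst_monomial_diagonal lam d.1

lemma trace_msubstH_diagonal (j : ℕ) (lam : Fin n → ℂ) :
    LinearMap.trace ℂ _ (msubstH j (Matrix.diagonal lam))
      = ∑ d : {d : Fin n →₀ ℕ // Finsupp.degree d = j}, ∏ i, lam i ^ d.1 i := by
  classical
  rw [LinearMap.trace_eq_matrix_trace ℂ (hbasis j)]
  have h : LinearMap.toMatrix (hbasis j) (hbasis j) (msubstH j (Matrix.diagonal lam))
      = Matrix.diagonal (fun d : {d : Fin n →₀ ℕ // Finsupp.degree d = j} =>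
          ∏ i, lam i ^ d.1 i) := by
    ext d e
    rw [LinearMap.toMatrix_apply, msubstH_diagonal_apply, _root_.map_smul, Basis.repr_self]
    by_cases hde : d = e
    · subst hde; simp [Finsupp.single_apply]
    · simp [Finsupp.single_apply, Matrix.diagonal_apply, hde, Ne.symm hde]
  rw [h, Matrix.trace_diagonal]

lemma trace_msubstH_conj (j : ℕ) (A Q Q' : Matrix (Fin n) (Fin n) ℂ) (lam : Fin n → ℂ)
    (h1 : Q * Q' = 1) (hA : A = Q * Matrix.diagonal lam * Q') :
    LinearMap.trace ℂ _ (msubstH j A)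
      = ∑ d : {d : Fin n →₀ ℕ // Finsupp.degree d = j}, ∏ i, lam i ^ d.1 i := by
  have h2 : Q' * Q = 1 := mul_eq_one_comm.mp h1
  rw [hA, Matrix.mul_assoc, msubstH_mul, msubstH_mul, LinearMap.trace_mul_comm, mul_assoc,
    ← msubstH_mul, h2, msubstH_one, mul_one, trace_msubstH_diagonal]

lemma exists_diag (A : Matrix (Fin n) (Fin n) ℂ) (k : ℕ) (hk : 0 < k) (hAk : A ^ k = 1) :
    ∃ (lam : Fin n → ℂ) (Q Q' : Matrix (Fin n) (Fin n) ℂ),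
      Q * Q' = 1 ∧ A = Q * Matrix.diagonal lam * Q' := by
  classical
  set f : (Fin n → ℂ) →ₗ[ℂ] (Fin n → ℂ) := Matrix.mulVecLin A with hfdef
  have hfk : f ^ k = 1 := by
    have : ∀ m : ℕ, Matrix.mulVecLin (A ^ m) = (Matrix.mulVecLin A) ^ m := by
      intro m
      induction m with
      | zero => simp only [pow_zero, Matrix.mulVecLin_one]; rfl
      | succ m ih => rw [pow_succ, pow_succ, Matrix.mulVecLin_mul, ih]; rfl
    rw [hfdef, ← this, hAk, Matrix.mulVecLin_one]; rfl
  set S : Set (Fin n → ℂ) := {v : Fin n → ℂ | ∃ μ : ℂ, f v = μ • v} with hS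
  have hkC : (k : ℂ) ≠ 0 := Nat.cast_ne_zero.mpr hk.ne'
  have hspan : Submodule.span ℂ S = ⊤ := by
    rw [eq_top_iff]
    intro v _
    set ζ : ℂ := Complex.exp (2 * Real.pi * Complex.I / k) with hζdef
    have hζ : IsPrimitiveRoot ζ k := Complex.isPrimitiveRoot_exp k hk.ne'
    set w : ℕ → (Fin n → ℂ) := fun m =>
      (k : ℂ)⁻¹ • ∑ i ∈ Finset.range k, ((ζ ^ m)⁻¹) ^ i • (f ^ i) v with hw
    have hfw : ∀ m, f (w m) = (ζ ^ m) • w m := by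
      intro m
      set c : ℂ := ζ ^ m with hc
      have hck : c ^ k = 1 := by
        rw [hc, ← pow_mul, mul_comm m k, pow_mul, hζ.pow_eq_one, one_pow]
      have hc0 : c ≠ 0 := by
        intro h
        rw [h, zero_pow hk.ne'] at hck
        exact zero_ne_one hck
      set gfun : ℕ → (Fin n → ℂ) := fun i => (c⁻¹) ^ i • (f ^ i) v with hg
      have h0 : gfun k = gfun 0 := by
        simp only [hg, pow_zero, one_smul]
        rw [inv_pow, hck, inv_one, hfk, one_smul, Module.End.one_apply]
      have hshift : ∑ i ∈ Finset.range k, gfun (i + 1) = ∑ i ∈ Finset.range k, gfun i := by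
        have hs1 := Finset.sum_range_succ' gfun k
        have hs2 := Finset.sum_range_succ gfun k
        rw [hs2] at hs1
        rw [h0] at hs1
        exact add_right_cancel hs1.symm
      have step : ∀ i : ℕ, f (gfun i) = c • gfun (i + 1) := by
        intro i
        show f (c⁻¹ ^ i • (f ^ i) v) = c • (c⁻¹ ^ (i + 1) • (f ^ (i + 1)) v)
        rw [_root_.map_smul, smul_smul]
        have hcc : (c⁻¹) ^ i = c * (c⁻¹) ^ (i + 1) := by
          rw [pow_succ, mul_comm ((c⁻¹) ^ i) c⁻¹, ← mul_assoc, mul_inv_cancel₀ hc0, one_mul]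
        rw [← hcc]
        congr 1
        rw [pow_succ' f i, Module.End.mul_apply]
      have : f (w m) = (k : ℂ)⁻¹ • ∑ i ∈ Finset.range k, c • gfun (i + 1) := by
        rw [hw]
        simp only
        rw [_root_.map_smul, map_sum]
        congr 1
        exact Finset.sum_congr rfl fun i _ => step i
      rw [this]
      rw [← Finset.smul_sum, hshift]
      rw [smul_comm]
    have hsum : ∑ m ∈ Finset.range k, w m = v := by
      have hswap : ∑ m ∈ Finset.range k, ∑ i ∈ Finset.range k, ((ζ ^ m)⁻¹) ^ i • (f ^ i) v
          = ∑ i ∈ Finset.range k, (∑ m ∈ Finset.range k, ((ζ ^ i)⁻¹) ^ m) • (f ^ i) v := by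
        rw [Finset.sum_comm]
        refine Finset.sum_congr rfl fun i _ => ?_
        rw [Finset.sum_smul]
        refine Finset.sum_congr rfl fun m _ => ?_
        congr 1
        rw [← inv_pow, ← inv_pow, ← pow_mul, ← pow_mul, mul_comm]
      have hgeo : ∀ i ∈ Finset.range k, i ≠ 0 →
          (∑ m ∈ Finset.range k, ((ζ ^ i)⁻¹) ^ m) • ((f ^ i) v) = 0 := by
        intro i hi hi0
        have hne : (ζ ^ i)⁻¹ ≠ 1 := by
          rw [ne_eq, inv_eq_one]
          exact hζ.pow_ne_one_of_pos_of_lt hi0 (Finset.mem_range.mp hi)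
        rw [geom_sum_eq hne]
        have hik : ((ζ ^ i)⁻¹) ^ k = 1 := by
          rw [inv_pow, ← pow_mul, mul_comm i k, pow_mul, hζ.pow_eq_one, one_pow, inv_one]
        rw [hik, sub_self, zero_div, zero_smul]
      calc ∑ m ∈ Finset.range k, w m
          = (k : ℂ)⁻¹ • ∑ m ∈ Finset.range k, ∑ i ∈ Finset.range k, ((ζ ^ m)⁻¹) ^ i • (f ^ i) v := by
            rw [Finset.smul_sum]
        _ = (k : ℂ)⁻¹ • ∑ i ∈ Finset.range k, (∑ m ∈ Finset.range k, ((ζ ^ i)⁻¹) ^ m) • (f ^ i) v := by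
            rw [hswap]
        _ = (k : ℂ)⁻¹ • ((k : ℂ) • v) := by
            congr 1
            rw [Finset.sum_eq_single 0 hgeo (fun h => absurd (Finset.mem_range.mpr hk) h)]
            simp
        _ = v := by rw [smul_smul, inv_mul_cancel₀ hkC, one_smul]
    rw [← hsum]
    exact Submodule.sum_mem _ fun m _ => Submodule.subset_span ⟨ζ ^ m, hfw m⟩
  obtain ⟨b, hbS, hbsp, hbli⟩ := exists_linearIndependent ℂ S
  rw [hspan] at hbsp
  have hfin : b.Finite := hbli.setFinite
  have : Fintype b := hfin.fintype
  let b0 : Basis b ℂ (Fin n → ℂ) :=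
    Basis.mk hbli (by rw [Subtype.range_val]; exact hbsp.ge)
  have hcard : Fintype.card b = n := by
    rw [← Module.finrank_eq_card_basis b0, Module.finrank_fin_fun]
  let e : b ≃ Fin n := Fintype.equivFinOfCardEq hcard
  let bb : Basis (Fin n) ℂ (Fin n → ℂ) := b0.reindex e
  have hbb : ∀ i, (bb i : Fin n → ℂ) ∈ S := by
    intro i
    have hmem : (bb i : Fin n → ℂ) ∈ b := by
      show (b0.reindex e) i ∈ b
      rw [Module.Basis.reindex_apply, Basis.mk_apply]
      exact (e.symm i).2
    exact hbS hmem
  choose lam hlam using fun i => hbb i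
  set Q : Matrix (Fin n) (Fin n) ℂ := (Pi.basisFun ℂ (Fin n)).toMatrix ⇑bb with hQdef
  set Q' : Matrix (Fin n) (Fin n) ℂ := bb.toMatrix ⇑(Pi.basisFun ℂ (Fin n)) with hQ'def
  have h1 : Q * Q' = 1 := Basis.toMatrix_mul_toMatrix_flip _ _
  have hQ : ∀ x i, Q x i = bb i x := by
    intro x i
    rw [hQdef, Basis.toMatrix_apply, Pi.basisFun_repr]
  have hAQ : A * Q = Q * Matrix.diagonal lam := by
    ext x i
    rw [Matrix.mul_diagonal, Matrix.mul_apply]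
    have h2 := congrFun (hlam i) x
    rw [hfdef] at h2
    simp only [Matrix.mulVecLin_apply, Matrix.mulVec, dotProduct, Pi.smul_apply,
      smul_eq_mul] at h2
    calc ∑ y, A x y * Q y i = ∑ y, A x y * bb i y :=
          Finset.sum_congr rfl fun y _ => by rw [hQ]
      _ = lam i * bb i x := h2
      _ = Q x i * lam i := by rw [hQ, mul_comm]
  refine ⟨lam, Q, Q', h1, ?_⟩
  calc A = A * (Q * Q') := by rw [h1, mul_one]
    _ = (A * Q) * Q' := by rw [mul_assoc]
    _ = Q * Matrix.diagonal lam * Q' := by rw [hAQ]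

lemma geom_mul (a : ℂ) :
    (1 - PowerSeries.C a * PowerSeries.X) * PowerSeries.mk (fun k => a ^ k) = 1 := by
  ext N
  rw [sub_mul, one_mul, mul_assoc, map_sub]
  cases N with
  | zero =>
    rw [PowerSeries.coeff_C_mul]
    have h0 : PowerSeries.coeff 0 (PowerSeries.X * PowerSeries.mk (fun k => a ^ k)) = 0 := by
      rw [PowerSeries.coeff_zero_eq_constantCoeff, _root_.map_mul,
        PowerSeries.constantCoeff_X, zero_mul]
    rw [h0, mul_zero, sub_zero, PowerSeries.coeff_mk, pow_zero, PowerSeries.coeff_zero_eq_constantCoeff,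
      _root_.map_one]
  | succ m =>
    rw [PowerSeries.coeff_C_mul, PowerSeries.coeff_succ_X_mul, PowerSeries.coeff_mk,
      PowerSeries.coeff_mk, pow_succ, mul_comm (a ^ m) a, sub_self]
    rw [PowerSeries.coeff_one, if_neg (Nat.succ_ne_zero m)]

lemma coeff_inv_det (A : Matrix (Fin n) (Fin n) ℂ) (lam : Fin n → ℂ)
    (Q Q' : Matrix (Fin n) (Fin n) ℂ) (h1 : Q * Q' = 1)
    (hA : A = Q * Matrix.diagonal lam * Q') (j : ℕ) :
    PowerSeries.coeff j
        ((↑(Matrix.det ((1 : Matrix (Fin n) (Fin n) (Polynomial ℂ))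
            - (Polynomial.X : Polynomial ℂ) • A.map Polynomial.C)) : PowerSeries ℂ)⁻¹)
      = ∑ d : {d : Fin n →₀ ℕ // Finsupp.degree d = j}, ∏ i, lam i ^ d.1 i := by
  classical
  have hQQ' : (Q.map Polynomial.C) * (Q'.map Polynomial.C) = 1 := by
    rw [← Matrix.map_mul, h1, Matrix.map_one _ (map_zero _) (map_one _)]
  have hdet : Matrix.det ((1 : Matrix (Fin n) (Fin n) (Polynomial ℂ))
      - (Polynomial.X : Polynomial ℂ) • A.map Polynomial.C)
      = ∏ i, (1 - Polynomial.C (lam i) * Polynomial.X) := by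
    have hmid : (1 : Matrix (Fin n) (Fin n) (Polynomial ℂ))
        - (Polynomial.X : Polynomial ℂ) • (Matrix.diagonal lam).map Polynomial.C
        = Matrix.diagonal (fun i => 1 - Polynomial.C (lam i) * Polynomial.X) := by
      ext i i'
      by_cases h : i = i'
      · subst h
        rw [Matrix.sub_apply, Matrix.smul_apply, Matrix.one_apply_eq, Matrix.map_apply,
          Matrix.diagonal_apply_eq, Matrix.diagonal_apply_eq, smul_eq_mul, mul_comm]
      · rw [Matrix.sub_apply, Matrix.smul_apply, Matrix.one_apply_ne h, Matrix.map_apply,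
          Matrix.diagonal_apply_ne _ h, Matrix.diagonal_apply_ne _ h, map_zero, smul_zero,
          sub_zero]
    have hconj : (1 : Matrix (Fin n) (Fin n) (Polynomial ℂ))
        - (Polynomial.X : Polynomial ℂ) • A.map Polynomial.C
        = (Q.map Polynomial.C) * ((1 : Matrix (Fin n) (Fin n) (Polynomial ℂ))
            - (Polynomial.X : Polynomial ℂ) • (Matrix.diagonal lam).map Polynomial.C)
          * (Q'.map Polynomial.C) := by
      calc (1 : Matrix (Fin n) (Fin n) (Polynomial ℂ))
            - (Polynomial.X : Polynomial ℂ) • A.map Polynomial.C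
          = Q.map Polynomial.C * Q'.map Polynomial.C
            - (Polynomial.X : Polynomial ℂ) •
              ((Q * Matrix.diagonal lam * Q').map Polynomial.C) := by rw [hQQ', hA]
        _ = Q.map Polynomial.C * Q'.map Polynomial.C
            - Q.map Polynomial.C *
                ((Polynomial.X : Polynomial ℂ) • (Matrix.diagonal lam).map Polynomial.C) *
              Q'.map Polynomial.C := by
            rw [Matrix.map_mul, Matrix.map_mul, Matrix.mul_smul, Matrix.smul_mul]
        _ = (Q.map Polynomial.C) * ((1 : Matrix (Fin n) (Fin n) (Polynomial ℂ))
              - (Polynomial.X : Polynomial ℂ) • (Matrix.diagonal lam).map Polynomial.C)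
            * (Q'.map Polynomial.C) := by
            rw [Matrix.mul_sub, Matrix.sub_mul, Matrix.mul_one]
    rw [hconj, Matrix.det_mul, Matrix.det_mul, hmid, Matrix.det_diagonal,
      mul_comm ((Q.map Polynomial.C).det), mul_assoc, ← Matrix.det_mul, hQQ',
      Matrix.det_one, mul_one]
  rw [hdet]
  have hcast : ((∏ i, (1 - Polynomial.C (lam i) * Polynomial.X) : Polynomial ℂ) : PowerSeries ℂ)
      = ∏ i, (1 - PowerSeries.C (lam i) * PowerSeries.X) := by
    rw [← Polynomial.coeToPowerSeries.ringHom_apply, map_prod]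
    refine Finset.prod_congr rfl fun i _ => ?_
    rw [map_sub, _root_.map_mul, _root_.map_one, Polynomial.coeToPowerSeries.ringHom_apply,
      Polynomial.coeToPowerSeries.ringHom_apply, Polynomial.coe_C, Polynomial.coe_X]
  rw [hcast]
  have hC0 : PowerSeries.constantCoeff
      (∏ i, (1 - PowerSeries.C (lam i) * PowerSeries.X)) ≠ 0 := by
    rw [map_prod]
    simp
  have hinv : (∏ i, (1 - PowerSeries.C (lam i) * PowerSeries.X))⁻¹
      = ∏ i, PowerSeries.mk (fun k => lam i ^ k) := by
    rw [PowerSeries.inv_eq_iff_mul_eq_one hC0, ← Finset.prod_mul_distrib]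
    calc ∏ i, (PowerSeries.mk fun k => lam i ^ k) * (1 - PowerSeries.C (lam i) * PowerSeries.X)
        = ∏ _i : Fin n, (1 : PowerSeries ℂ) := Finset.prod_congr rfl fun i _ => by
            rw [mul_comm]; exact geom_mul (lam i)
      _ = 1 := Finset.prod_const_one
  rw [hinv, PowerSeries.coeff_prod]
  have hmem : ∀ d : Fin n →₀ ℕ,
      d ∈ Finset.finsuppAntidiag (Finset.univ : Finset (Fin n)) j ↔ Finsupp.degree d = j := by
    intro d
    rw [Finset.mem_finsuppAntidiag]
    have hdeg : Finsupp.degree d = Finset.univ.sum d :=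
      Finset.sum_subset (Finset.subset_univ _)
        (fun i _ hi => Finsupp.notMem_support_iff.mp hi)
    constructor
    · rintro ⟨h, -⟩; rw [hdeg, h]
    · intro h; exact ⟨by rw [← hdeg, h], Finset.subset_univ _⟩
  rw [Finset.sum_subtype (Finset.finsuppAntidiag (Finset.univ : Finset (Fin n)) j) hmem
    (fun d => ∏ i, PowerSeries.coeff (d i) (PowerSeries.mk (fun k => lam i ^ k)))]
  refine Finset.sum_congr rfl fun d _ => Finset.prod_congr rfl fun i _ => ?_
  rw [PowerSeries.coeff_mk]

lemma trace_eq_coeff (A : Matrix (Fin n) (Fin n) ℂ) (k : ℕ) (hk : 0 < k) (hAk : A ^ k = 1)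
    (j : ℕ) :
    LinearMap.trace ℂ _ (msubstH j A)
      = PowerSeries.coeff j
          ((↑(Matrix.det ((1 : Matrix (Fin n) (Fin n) (Polynomial ℂ))
              - (Polynomial.X : Polynomial ℂ) • A.map Polynomial.C)) : PowerSeries ℂ)⁻¹) := by
  obtain ⟨lam, Q, Q', h1, hA⟩ := exists_diag A k hk hAk
  rw [trace_msubstH_conj j A Q Q' lam h1 hA, coeff_inv_det A lam Q Q' h1 hA j]

set_option synthInstance.maxHeartbeats 1000000 in
set_option maxHeartbeats 1000000 in
lemma finrank_invariantsDeg {G : Type*} [Group G] [Fintype G]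
    (ρ : G →* Matrix.GeneralLinearGroup (Fin n) ℂ) (j : ℕ) :
    (Module.finrank ℂ (invariantsDeg ρ j) : ℂ)
      = (Fintype.card G : ℂ)⁻¹ * ∑ g : G,
          LinearMap.trace ℂ _ (msubstH j (((ρ g)⁻¹ : Matrix.GeneralLinearGroup (Fin n) ℂ) :
            Matrix (Fin n) (Fin n) ℂ)) := by
  classical
  set B : G → Matrix (Fin n) (Fin n) ℂ := fun g =>
    (((ρ g)⁻¹ : Matrix.GeneralLinearGroup (Fin n) ℂ) : Matrix (Fin n) (Fin n) ℂ) with hB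
  have hBmul : ∀ g h : G, B h * B g = B (g * h) := by
    intro g h
    rw [hB]
    simp only
    rw [← Units.val_mul]
    congr 1
    rw [← _root_.mul_inv_rev, ← _root_.map_mul]
  set T : G → (homogeneousSubmodule (Fin n) ℂ j →ₗ[ℂ] homogeneousSubmodule (Fin n) ℂ j) :=
    fun g => msubstH j (B g) with hT
  have hTmul : ∀ g h : G, T h * T g = T (g * h) := by
    intro g h
    rw [hT]
    simp only
    rw [← msubstH_mul, hBmul]
  set P : Submodule ℂ (homogeneousSubmodule (Fin n) ℂ j) :=
    Submodule.comap (homogeneousSubmodule (Fin n) ℂ j).subtype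
      (⨅ g : G, LinearMap.ker ((polyAct ρ g).toLinearMap - LinearMap.id)) with hP
  have hPmem : ∀ x : homogeneousSubmodule (Fin n) ℂ j, x ∈ P ↔ ∀ g : G, T g x = x := by
    intro x
    rw [hP]
    simp only [Submodule.mem_comap, Submodule.mem_iInf, LinearMap.mem_ker, LinearMap.sub_apply,
      LinearMap.id_apply, sub_eq_zero]
    constructor
    · intro h g
      apply Subtype.ext
      exact h g
    · intro h g
      exact congrArg Subtype.val (h g)
  have hcard0 : (Fintype.card G : ℂ) ≠ 0 := Nat.cast_ne_zero.mpr Fintype.card_ne_zero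
  set e : homogeneousSubmodule (Fin n) ℂ j →ₗ[ℂ] homogeneousSubmodule (Fin n) ℂ j :=
    (Fintype.card G : ℂ)⁻¹ • ∑ g : G, T g with he
  have hfix : ∀ h : G, ∀ x, T h (e x) = e x := by
    intro h x
    rw [he]
    simp only [LinearMap.smul_apply, LinearMap.sum_apply, _root_.map_smul, map_sum]
    congr 1
    rw [show (∑ g : G, T h (T g x)) = ∑ g : G, T (g * h) x from
      Finset.sum_congr rfl fun g _ => by rw [← hTmul]; rfl]
    exact Fintype.sum_equiv (Equiv.mulRight h) _ _ (fun g => rfl)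
  have hproj : LinearMap.IsProj P e := by
    constructor
    · intro x
      rw [hPmem]
      intro h
      exact hfix h x
    · intro x hx
      rw [he]
      simp only [LinearMap.smul_apply, LinearMap.sum_apply]
      rw [Finset.sum_congr rfl fun g _ => (hPmem x).mp hx g, Finset.sum_const,
        Finset.card_univ, ← Nat.cast_smul_eq_nsmul ℂ, smul_smul, inv_mul_cancel₀ hcard0,
        one_smul]
  haveI : Module.Free ℂ P := Module.Free.of_basis (Basis.ofVectorSpace ℂ P)
  haveI : Module.Free ℂ (LinearMap.ker e) :=
    Module.Free.of_basis (Basis.ofVectorSpace ℂ (LinearMap.ker e))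
  have htrace : LinearMap.trace ℂ _ e = (Module.finrank ℂ P : ℂ) := hproj.trace
  have hrk : Module.finrank ℂ (invariantsDeg ρ j) = Module.finrank ℂ P := by
    have hmap : invariantsDeg ρ j = Submodule.map (homogeneousSubmodule (Fin n) ℂ j).subtype P := by
      rw [hP, Submodule.map_comap_subtype]
      rfl
    rw [hmap, Submodule.finrank_map_subtype_eq]
  rw [hrk, ← htrace, he, _root_.map_smul, map_sum, smul_eq_mul]

end MolienAux

/-- Molien's formula: for a finite group `G` acting linearly on `V = ℂⁿ` via
`ρ : G →* GLₙ(ℂ)`, the Poincaré series `∑ⱼ dim ℂ[V]^G_j · tʲ` of the invariant ring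
equals `(1/|G|) ∑_{g ∈ G} 1 / det(1 - t·g)`, as formal power series in `t`. -/
theorem stmt17 {n : ℕ} {G : Type*} [Group G] [Fintype G]
    (ρ : G →* Matrix.GeneralLinearGroup (Fin n) ℂ) :
    (PowerSeries.mk fun j => (Module.finrank ℂ (invariantsDeg ρ j) : ℂ))
      = (Fintype.card G : ℂ)⁻¹ •
          ∑ g : G,
            (↑(Matrix.det
                ((1 : Matrix (Fin n) (Fin n) (Polynomial ℂ)) - (Polynomial.X : Polynomial ℂ) •
                  ((ρ g : Matrix (Fin n) (Fin n) ℂ)).map Polynomial.C))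
              : PowerSeries ℂ)⁻¹ := by
  apply PowerSeries.ext
  intro j
  rw [PowerSeries.coeff_mk, MolienAux.finrank_invariantsDeg ρ j, _root_.map_smul, map_sum,
    smul_eq_mul]
  congr 1
  refine Fintype.sum_equiv (Equiv.inv G) _ _ fun g => ?_
  have hmat : (((ρ g)⁻¹ : Matrix.GeneralLinearGroup (Fin n) ℂ) : Matrix (Fin n) (Fin n) ℂ)
      = ((ρ g⁻¹ : Matrix.GeneralLinearGroup (Fin n) ℂ) : Matrix (Fin n) (Fin n) ℂ) := by
    rw [← map_inv]
  have hpow : ((ρ g⁻¹ : Matrix.GeneralLinearGroup (Fin n) ℂ) : Matrix (Fin n) (Fin n) ℂ)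
      ^ (Fintype.card G) = 1 := by
    rw [← Units.val_pow_eq_pow_val, ← map_pow, pow_card_eq_one, map_one, Units.val_one]
  rw [hmat]
  exact MolienAux.trace_eq_coeff _ (Fintype.card G) Fintype.card_pos hpow j
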